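/- For l ≥ 3, the degree of BRW(x; M_1, ..., M_l) equals 2^{⌊lg l⌋+1} − 1, regardless of the values M_1, ..., M_l. -/

import Mathlib

/-- For `l ≥ 3`, `deg BRW(x; M_1,…,M_l) = 2^(⌊lg l⌋+1) − 1`, regardless of the `M_i`. -/
theorem brw_degree {F : Type*} [Field F] [Fintype F]
    (BRW : List F → Polynomial F)
    (hB0 : BRW [] = 0)
    (hB1 : ∀ a : F, BRW [a] = Polynomial.C a)
    (hB2 : ∀ a b : F, BRW [a, b] = Polynomial.C a * Polynomial.X + Polynomial.C b)
    (hB3 : ∀ a b c : F, BRW [a, b, c] =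
      (Polynomial.X + Polynomial.C a) * (Polynomial.X ^ 2 + Polynomial.C b) + Polynomial.C c)
    (hBrec : ∀ l : List F, 4 ≤ l.length →
      BRW l = BRW (l.take (2 ^ Nat.log 2 l.length - 1)) *
        (Polynomial.X ^ (2 ^ Nat.log 2 l.length) +
          Polynomial.C (l.getD (2 ^ Nat.log 2 l.length - 1) 0)) +
        BRW (l.drop (2 ^ Nat.log 2 l.length))) :
    ∀ l : List F, 3 ≤ l.length →
      (BRW l).natDegree = 2 ^ (Nat.log 2 l.length + 1) - 1 := by
  classical
  open Polynomial in
  have hsmall : ∀ l : List F, l.length ≤ 2 → (BRW l).degree ≤ 1 := by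
    intro l hl
    rcases l with _ | ⟨a, _ | ⟨b, _ | ⟨c, t⟩⟩⟩
    · rw [hB0]; simp
    · rw [hB1]; exact degree_C_le.trans (by norm_num)
    · rw [hB2]; exact degree_linear_le
    · simp at hl
  have key : ∀ n : ℕ, ∀ l : List F, l.length = n → 3 ≤ n →
      (BRW l).Monic ∧ (BRW l).natDegree = 2 ^ (Nat.log 2 n + 1) - 1 := by
    intro n
    induction n using Nat.strong_induction_on with
    | _ n ih =>
      intro l hlen h3
      rcases eq_or_lt_of_le h3 with h | h
      · -- l.length = 3
        subst hlen
        rcases l with _ | ⟨a, _ | ⟨b, _ | ⟨c, _ | ⟨d, t⟩⟩⟩⟩ <;>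
          simp only [List.length_nil, List.length_cons] at h ⊢ <;> try omega
        rw [hB3]
        have h1 : (X + C a : Polynomial F).Monic := monic_X_add_C a
        have h2 : (X ^ 2 + C b : Polynomial F).Monic := monic_X_pow_add_C b two_ne_zero
        have hm : ((X + C a) * (X ^ 2 + C b) : Polynomial F).Monic := h1.mul h2
        have hd : ((X + C a) * (X ^ 2 + C b) : Polynomial F).natDegree = 3 := by
          rw [h1.natDegree_mul h2, natDegree_X_add_C, natDegree_X_pow_add_C]
        have hdc : (C c : Polynomial F).degree <
            ((X + C a) * (X ^ 2 + C b) : Polynomial F).degree := by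
          rw [degree_eq_natDegree hm.ne_zero, hd]
          exact degree_C_le.trans_lt (by norm_num)
        have hlog : Nat.log 2 3 = 1 :=
          Nat.log_eq_of_pow_le_of_lt_pow (by norm_num) (by norm_num)
        refine ⟨hm.add_of_left hdc, ?_⟩
        rw [natDegree_eq_of_degree_eq (degree_add_eq_left_of_degree_lt hdc), hd, hlog]
        norm_num
      · -- l.length ≥ 4
        subst hlen
        have h4 : 4 ≤ l.length := by omega
        set r := Nat.log 2 l.length with hr
        have h2r : 2 ≤ r := (Nat.le_log_iff_pow_le one_lt_two (by omega)).mpr (by omega)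
        have hpow_le : 2 ^ r ≤ l.length := Nat.pow_log_le_self 2 (by omega)
        have hlt : l.length < 2 ^ (r + 1) := Nat.lt_pow_succ_log_self one_lt_two _
        have hps : 2 ^ r = 2 * 2 ^ (r - 1) := by
          rw [← pow_succ']
          congr 1
          omega
        have hp1 : 1 ≤ 2 ^ (r - 1) := Nat.one_le_two_pow
        have hp2 : 4 ≤ 2 ^ r := by
          calc 4 = 2 ^ 2 := rfl
          _ ≤ 2 ^ r := Nat.pow_le_pow_right (by norm_num) h2r
        rw [hBrec l h4]
        -- take part
        have htlen : (l.take (2 ^ r - 1)).length = 2 ^ r - 1 := by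
          rw [List.length_take]
          omega
        have hlogt : Nat.log 2 (2 ^ r - 1) = r - 1 := by
          apply Nat.log_eq_of_pow_le_of_lt_pow
          · omega
          · have : r - 1 + 1 = r := by omega
            rw [this]; omega
        obtain ⟨hmt, hdt⟩ := ih (2 ^ r - 1) (by omega) _ htlen (by omega)
        rw [hlogt] at hdt
        have hr1 : r - 1 + 1 = r := by omega
        rw [hr1] at hdt
        -- the monic factor
        have hmx : ((X : Polynomial F) ^ (2 ^ r) +
            C (l.getD (2 ^ r - 1) 0)).Monic := monic_X_pow_add_C _ (by omega)
        have hmP : (BRW (l.take (2 ^ r - 1)) *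
            ((X : Polynomial F) ^ (2 ^ r) + C (l.getD (2 ^ r - 1) 0))).Monic := hmt.mul hmx
        have hdP : (BRW (l.take (2 ^ r - 1)) *
            ((X : Polynomial F) ^ (2 ^ r) + C (l.getD (2 ^ r - 1) 0))).natDegree
            = 2 ^ (r + 1) - 1 := by
          rw [hmt.natDegree_mul hmx, hdt, natDegree_X_pow_add_C, pow_succ]
          omega
        -- the drop part
        have hdlen : (l.drop (2 ^ r)).length = l.length - 2 ^ r := by
          rw [List.length_drop]
        have hdQ : (BRW (l.drop (2 ^ r))).degree <
            (BRW (l.take (2 ^ r - 1)) *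
              ((X : Polynomial F) ^ (2 ^ r) + C (l.getD (2 ^ r - 1) 0))).degree := by
          rw [degree_eq_natDegree hmP.ne_zero, hdP]
          by_cases hc : 3 ≤ l.length - 2 ^ r
          · obtain ⟨hmq, hdq⟩ := ih (l.length - 2 ^ r) (by omega) _ hdlen hc
            have hlog2 : Nat.log 2 (l.length - 2 ^ r) < r := by
              apply Nat.log_lt_of_lt_pow (by omega)
              omega
            have hle : (BRW (l.drop (2 ^ r))).natDegree < 2 ^ (r + 1) - 1 := by
              rw [hdq]
              have hA : 2 ^ (Nat.log 2 (l.length - 2 ^ r) + 1) ≤ 2 ^ r :=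
                Nat.pow_le_pow_right (by norm_num) (by omega)
              have hB : 2 ^ r + 2 ^ r = 2 ^ (r + 1) := by rw [pow_succ]; omega
              omega
            calc (BRW (l.drop (2 ^ r))).degree
                ≤ ((BRW (l.drop (2 ^ r))).natDegree : WithBot ℕ) := degree_le_natDegree
              _ < ((2 ^ (r + 1) - 1 : ℕ) : WithBot ℕ) := by exact_mod_cast hle
          · refine lt_of_le_of_lt (hsmall _ (by omega)) ?_
            have h1lt : (1 : ℕ) < 2 ^ (r + 1) - 1 := by
              have : 2 ^ r ≤ 2 ^ (r + 1) := Nat.pow_le_pow_right (by norm_num) (by omega)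
              omega
            exact_mod_cast h1lt
        refine ⟨hmP.add_of_left hdQ, ?_⟩
        rw [natDegree_eq_of_degree_eq (degree_add_eq_left_of_degree_lt hdQ), hdP]
  intro l hl
  exact (key l.length l rfl hl).2
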